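/- Let z₀, z ∈ ℂ and define f(θ) = |z₀ + z e^{jθ}|². Let φ₁, φ₂, φ₃ ∈ ℝ be such that the matrix A with rows (1, cos φₗ, sin φₗ) is invertible, and let y = (f(φ₁), f(φ₂), f(φ₃))ᵀ. Then x := A⁻¹ y equals (|z₀|² + |z|², 2Re(z₀ z̄), 2Im(z₀ z̄))ᵀ, and hence (if z₀ z̄ ≠ 0) θ* = arg(x₂ + j x₃) maximizes f. -/

import Mathlib

open Complex Real Matrix

lemma key_expand (z₀ z : ℂ) (θ : ℝ) :
    ‖z₀ + z * Complex.exp ((θ : ℂ) * Complex.I)‖ ^ 2 =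
      ‖z₀‖ ^ 2 + ‖z‖ ^ 2 +
        (2 * (z₀ * (starRingEnd ℂ) z).re * Real.cos θ +
         2 * (z₀ * (starRingEnd ℂ) z).im * Real.sin θ) := by
  have h : z * Complex.exp ((θ : ℂ) * Complex.I) =
      z * ((Real.cos θ : ℂ) + (Real.sin θ : ℂ) * Complex.I) := by
    rw [Complex.exp_mul_I, Complex.ofReal_cos, Complex.ofReal_sin]
  rw [h, Complex.sq_norm, Complex.sq_norm, Complex.sq_norm, Complex.normSq_add]
  simp [Complex.normSq_apply, Complex.mul_re, Complex.mul_im, Complex.cos_ofReal_re, Complex.sin_ofReal_re]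
  nlinarith [Real.sin_sq_add_cos_sq θ]

theorem stmt_3 (z₀ z : ℂ) (φ : Fin 3 → ℝ)
    (A : Matrix (Fin 3) (Fin 3) ℝ)
    (hA : A = Matrix.of fun l i => ![1, Real.cos (φ l), Real.sin (φ l)] i)
    (hdet : IsUnit A.det)
    (y : Fin 3 → ℝ)
    (hy : y = fun l => ‖z₀ + z * Complex.exp ((φ l : ℂ) * Complex.I)‖ ^ 2)
    (x : Fin 3 → ℝ) (hx : x = A⁻¹ *ᵥ y) :
    x = ![‖z₀‖ ^ 2 + ‖z‖ ^ 2,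
          2 * (z₀ * (starRingEnd ℂ) z).re,
          2 * (z₀ * (starRingEnd ℂ) z).im]
    ∧ (z₀ * (starRingEnd ℂ) z ≠ 0 →
        ∀ θ : ℝ,
          ‖z₀ + z * Complex.exp ((((x 1 : ℝ) + (x 2 : ℝ) * Complex.I).arg : ℂ) * Complex.I)‖ ^ 2
            ≥ ‖z₀ + z * Complex.exp ((θ : ℂ) * Complex.I)‖ ^ 2) := by
  set w := z₀ * (starRingEnd ℂ) z with hw
  set c : Fin 3 → ℝ := ![‖z₀‖ ^ 2 + ‖z‖ ^ 2, 2 * w.re, 2 * w.im] with hc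
  have hyA : y = A *ᵥ c := by
    funext l
    rw [hy, hA]
    simp [Matrix.mulVec, dotProduct, Fin.sum_univ_three, hc, key_expand, Complex.mul_re, Complex.mul_im]
    simp only [hw, Complex.mul_re, Complex.mul_im, Complex.conj_re, Complex.conj_im]
    ring
  have hxc : x = c := by
    rw [hx, hyA, Matrix.mulVec_mulVec, Matrix.nonsing_inv_mul A hdet, Matrix.one_mulVec]
  refine ⟨hxc, fun hwne θ => ?_⟩
  have hx1 : x 1 = 2 * w.re := by rw [hxc]; rfl
  have hx2 : x 2 = 2 * w.im := by rw [hxc]; rfl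
  have h2w : ((x 1 : ℝ) : ℂ) + (x 2 : ℝ) * Complex.I = ((2:ℝ):ℂ) * w := by
    rw [hx1, hx2]
    apply Complex.ext <;> simp
  have harg : (((x 1 : ℝ) : ℂ) + (x 2 : ℝ) * Complex.I).arg = w.arg := by
    rw [h2w, Complex.arg_real_mul w (by norm_num : (0:ℝ) < 2)]
  rw [harg, key_expand, key_expand]
  have habs : ‖w‖ ≠ 0 := norm_ne_zero_iff.mpr hwne
  rw [Complex.cos_arg hwne, Complex.sin_arg]
  have hsq : ‖w‖ ^ 2 = w.re * w.re + w.im * w.im := by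
    rw [Complex.sq_norm]; rfl
  have h1 : 2 * w.re * (w.re / ‖w‖) + 2 * w.im * (w.im / ‖w‖)
      = 2 * ‖w‖ := by
    field_simp
    nlinarith [hsq]
  rw [h1]
  have h2 : 2 * w.re * Real.cos θ + 2 * w.im * Real.sin θ ≤ 2 * ‖w‖ := by
    nlinarith [sq_nonneg (w.re * Real.sin θ - w.im * Real.cos θ),
      Real.sin_sq_add_cos_sq θ, hsq, norm_nonneg w]
  linarith
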